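/- Coarse entropy is monotone under coarse embeddings: if there exists a coarse embedding f: X → Y between metric spaces, then h_∞(X) ≤ h_∞(Y). -/
import Mathlib


open Filter Set Metric
open scoped ENNReal

noncomputable section

/-- `p` represents a `δ`-pseudoorbit of `f` of length `n` starting at `x₀`:
`(p 0, p 1, …, p n)` with `p 0 = x₀` and `dist (f (p i)) (p (i+1)) ≤ δ` for `i < n`.
(Only the values `p 0, …, p n` are relevant.) -/
def IsPseudoOrbit {X : Type*} [MetricSpace X] (f : X → X) (δ : ℝ) (n : ℕ) (x₀ : X)
    (p : ℕ → X) : Prop :=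
  p 0 = x₀ ∧ ∀ i < n, dist (f (p i)) (p (i + 1)) ≤ δ

/-- The distance between two pseudoorbits of length `n`:
the maximum of `dist (p i) (q i)` over `0 ≤ i ≤ n`. -/
def orbitDist {X : Type*} [MetricSpace X] (n : ℕ) (p q : ℕ → X) : ℝ :=
  (Finset.range (n + 1)).sup' (by simp) fun i => dist (p i) (q i)

/-- A family `S` of pseudoorbits of length `n` is `R`-separated if any two distinct
members are at pseudoorbit distance at least `R`. -/
def IsSepFamily {X : Type*} [MetricSpace X] (n : ℕ) (R : ℝ) (S : Set (ℕ → X)) : Prop :=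
  ∀ p ∈ S, ∀ q ∈ S, p ≠ q → R ≤ orbitDist n p q

/-- `sepCard f n R δ x₀` is `s(f,n,R,δ,x₀)`: the supremum of cardinalities of
`R`-separated sets of `δ`-pseudoorbits of `f` of length `n` starting at `x₀`. -/
def sepCard {X : Type*} [MetricSpace X] (f : X → X) (n : ℕ) (R δ : ℝ) (x₀ : X) : ℝ≥0∞ :=
  ⨆ (S : Set (ℕ → X)) (_ : ∀ p ∈ S, IsPseudoOrbit f δ n x₀ p) (_ : IsSepFamily n R S),
    (S.encard : ℝ≥0∞)

/-- Extended logarithm `[0,∞] → [0,∞]` (negative values are truncated to `0`). -/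
def elog (x : ℝ≥0∞) : ℝ≥0∞ :=
  if x = ⊤ then ⊤ else ENNReal.ofReal (Real.log x.toReal)

/-- The coarse entropy of `f : X → X` computed at the basepoint `x₀`:
`h_∞(f) = lim_{δ→∞} lim_{R→∞} limsup_{n→∞} (1/n) log s(f,n,R,δ,x₀)`.
Since `s` is nondecreasing in `δ` and nonincreasing in `R`, the limits in `δ` and `R`
are the supremum over `δ > 0` and the infimum over `R > 0`, respectively. -/
def coarseEntropyAt {X : Type*} [MetricSpace X] (f : X → X) (x₀ : X) : ℝ≥0∞ :=
  ⨆ (δ : ℝ) (_ : 0 < δ), ⨅ (R : ℝ) (_ : 0 < R),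
    Filter.atTop.limsup fun n : ℕ => elog (sepCard f n R δ x₀) / (n : ℝ≥0∞)

end

/-- `f : X → Y` is a coarse embedding: there are nondecreasing control functions
`ρ₋, ρ₊ : ℝ → ℝ` with `ρ₋ → ∞` and
`ρ₋(d(x,x')) ≤ d(f x, f x') ≤ ρ₊(d(x,x'))` for all `x, x'`. -/
def IsCoarseEmbedding {X Y : Type*} [MetricSpace X] [MetricSpace Y] (f : X → Y) : Prop :=
  ∃ ρminus ρplus : ℝ → ℝ, Monotone ρminus ∧ Monotone ρplus ∧
    Filter.Tendsto ρminus Filter.atTop Filter.atTop ∧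
    ∀ x x' : X, ρminus (dist x x') ≤ dist (f x) (f x') ∧
      dist (f x) (f x') ≤ ρplus (dist x x')

/-- `f : X → Y` is a coarse equivalence: a coarse embedding with coarsely dense image. -/
def IsCoarseEquiv {X Y : Type*} [MetricSpace X] [MetricSpace Y] (f : X → Y) : Prop :=
  IsCoarseEmbedding f ∧ ∃ A : ℝ, 0 ≤ A ∧ ∀ y : Y, ∃ x : X, dist y (f x) < A

lemma elog_mono : Monotone elog := by
  intro a b hab
  unfold elog
  rcases eq_or_ne b ⊤ with rb | rb
  · simp [rb]
  · have ra : a ≠ ⊤ := fun h => rb (top_le_iff.mp (h ▸ hab))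
    rw [if_neg ra, if_neg rb]
    rcases eq_or_ne a 0 with r0 | r0
    · simp [r0]
    · exact ENNReal.ofReal_le_ofReal (Real.log_le_log (ENNReal.toReal_pos r0 ra)
        ((ENNReal.toReal_le_toReal ra rb).mpr hab))

lemma sepCard_le_aux {X Y : Type*} [MetricSpace X] [MetricSpace Y] (f : X → Y)
    (ρm ρp : ℝ → ℝ) (hρm : Monotone ρm) (hρp : Monotone ρp)
    (hb : ∀ x x' : X, ρm (dist x x') ≤ dist (f x) (f x') ∧
      dist (f x) (f x') ≤ ρp (dist x x'))
    (x₀ : X) (y₀ : Y) (n : ℕ) (R R' δ δ' : ℝ) (hR : 0 < R) (hR' : 0 < R')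
    (hRR' : R' ≤ ρm R) (hδ'1 : ρp δ ≤ δ') (hδ'2 : dist y₀ (f x₀) + ρp δ ≤ δ') :
    sepCard (id : X → X) n R δ x₀ ≤ sepCard (id : Y → Y) n R' δ' y₀ := by
  refine iSup_le fun S => iSup_le fun hS => iSup_le fun hsep => ?_
  set Φ : (ℕ → X) → (ℕ → Y) := fun p i => if i = 0 then y₀ else f (p i) with hΦ
  -- separation of images
  have key : ∀ p ∈ S, ∀ q ∈ S, p ≠ q →
      ∃ i ∈ Finset.range (n + 1), R' ≤ dist (Φ p i) (Φ q i) := by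
    intro p hp q hq hne
    have h1 := hsep p hp q hq hne
    rw [orbitDist, Finset.le_sup'_iff] at h1
    obtain ⟨i, hi, hdi⟩ := h1
    have hi0 : i ≠ 0 := by
      intro h
      rw [h, (hS p hp).1, (hS q hq).1] at hdi
      simp at hdi
      linarith
    refine ⟨i, hi, ?_⟩
    have : ρm R ≤ ρm (dist (p i) (q i)) := hρm hdi
    have h2 := (hb (p i) (q i)).1
    simp only [hΦ, if_neg hi0]
    linarith
  have hinj : Set.InjOn Φ S := by
    intro p hp q hq hpq
    by_contra hne
    obtain ⟨i, _, hdi⟩ := key p hp q hq hne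
    rw [hpq] at hdi
    simp at hdi
    linarith
  have hpo : ∀ q ∈ Φ '' S, IsPseudoOrbit (id : Y → Y) δ' n y₀ q := by
    rintro _ ⟨p, hp, rfl⟩
    constructor
    · simp [hΦ]
    · intro i hi
      have hstep : dist (f (p i)) (f (p (i + 1))) ≤ ρp δ := by
        refine le_trans (hb (p i) (p (i + 1))).2 (hρp ?_)
        have := (hS p hp).2 i hi
        simpa using this
      rcases Nat.eq_zero_or_pos i with rfl | hipos
      · simp only [hΦ, id_eq, if_pos rfl, if_neg one_ne_zero]
        have := (hS p hp).1
        calc dist y₀ (f (p 1)) ≤ dist y₀ (f (p 0)) + dist (f (p 0)) (f (p 1)) :=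
              dist_triangle _ _ _
          _ ≤ dist y₀ (f x₀) + ρp δ := by
              rw [this]
              have : dist (f (p 0)) (f (p 1)) ≤ ρp δ := hstep
              rw [← (hS p hp).1]
              linarith
          _ ≤ δ' := hδ'2
      · simp only [hΦ, id_eq, if_neg hipos.ne', if_neg (Nat.succ_ne_zero i)]
        exact le_trans hstep hδ'1
  have hsepY : IsSepFamily n R' (Φ '' S) := by
    rintro _ ⟨p, hp, rfl⟩ _ ⟨q, hq, rfl⟩ hne
    have hpq : p ≠ q := fun h => hne (by rw [h])
    obtain ⟨i, hi, hdi⟩ := key p hp q hq hpq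
    refine le_trans hdi ?_
    rw [orbitDist]
    exact Finset.le_sup' (fun i => dist (Φ p i) (Φ q i)) hi
  calc (S.encard : ℝ≥0∞) = ((Φ '' S).encard : ℝ≥0∞) := by rw [hinj.encard_image]
    _ ≤ sepCard (id : Y → Y) n R' δ' y₀ := by
        rw [sepCard]
        exact le_iSup_of_le (Φ '' S) (le_iSup_of_le hpo (le_iSup_of_le hsepY le_rfl))

/-- Coarse entropy is monotone under coarse embeddings:
if there is a coarse embedding `f : X → Y`, then `h_∞(X) ≤ h_∞(Y)`. -/
theorem coarseEntropy_le_of_coarseEmbedding {X Y : Type*} [MetricSpace X] [MetricSpace Y]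
    (f : X → Y) (hf : IsCoarseEmbedding f) (x₀ : X) (y₀ : Y) :
    coarseEntropyAt (id : X → X) x₀ ≤ coarseEntropyAt (id : Y → Y) y₀ := by
  obtain ⟨ρm, ρp, hρm, hρp, hlim, hb⟩ := hf
  rw [coarseEntropyAt, coarseEntropyAt]
  refine iSup₂_le fun δ hδ => ?_
  have hρp0 : (0 : ℝ) ≤ ρp 0 := by
    have := (hb x₀ x₀).2
    simpa using this
  have hρpδ : (0 : ℝ) ≤ ρp δ := le_trans hρp0 (hρp hδ.le)
  set δ' : ℝ := dist y₀ (f x₀) + ρp δ + 1 with hδ'def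
  have hδ'pos : 0 < δ' :=
    add_pos_of_nonneg_of_pos (add_nonneg dist_nonneg hρpδ) one_pos
  refine le_trans ?_
    (le_iSup₂ (f := fun (d : ℝ) (_ : 0 < d) => ⨅ (R : ℝ) (_ : 0 < R),
      Filter.atTop.limsup fun n : ℕ => elog (sepCard (id : Y → Y) n R d y₀) / (n : ℝ≥0∞))
      δ' hδ'pos)
  refine le_iInf₂ fun R' hR' => ?_
  obtain ⟨R₁, hR₁⟩ := Filter.tendsto_atTop_atTop.mp hlim R'
  set R : ℝ := max R₁ 1 with hRdef
  have hR : 0 < R := lt_of_lt_of_le one_pos (le_max_right _ _)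
  have hRR' : R' ≤ ρm R := hR₁ R (le_max_left _ _)
  refine le_trans (iInf₂_le R hR) ?_
  refine Filter.limsup_le_limsup (Filter.Eventually.of_forall fun n => ?_)
  refine ENNReal.div_le_div_right (elog_mono ?_) _
  exact sepCard_le_aux f ρm ρp hρm hρp hb x₀ y₀ n R R' δ δ' hR hR' hRR'
    (by linarith [dist_nonneg (x := y₀) (y := f x₀)]) (by linarith)
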